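/- For the k-means modelling procedure M on ℝ^{n×d}, viewed as a function of the single entry X_{i,j} with all other entries fixed, there exists a finite set of points outside of which the map X_{i,j} ↦ M(X)_{i,j} is piecewise Lipschitz: the real line decomposes into finitely many open intervals on each of which the map is Lipschitz with constant 1. -/

import Mathlib

open Finset

/-- The within-cluster sum of squares of a clustering `(c, μ)` of the rows
`Y` of a data matrix. -/
noncomputable def kmObj' (n d k : ℕ) (Y : Fin n → EuclideanSpace ℝ (Fin d))
    (c : Fin n → Fin k) (μ : Fin k → EuclideanSpace ℝ (Fin d)) : ℝ :=
  ∑ m : Fin n, ‖Y m - μ (c m)‖ ^ 2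

/-- The data matrix `X` with entry `(i, j)` replaced by `t`. -/
noncomputable def perturbEntry' (n d : ℕ) (X : Fin n → EuclideanSpace ℝ (Fin d))
    (i : Fin n) (j : Fin d) (t : ℝ) : Fin n → EuclideanSpace ℝ (Fin d) :=
  fun m => X m + (if m = i then (t - X i j) • EuclideanSpace.single j (1 : ℝ) else 0)

namespace KM19

variable {n d k : ℕ}

/-- the cluster of label `l` -/
def cl (c : Fin n → Fin k) (l : Fin k) : Finset (Fin n) :=
  Finset.univ.filter (fun m => c m = l)

lemma mem_cl {c : Fin n → Fin k} {l : Fin k} {m : Fin n} : m ∈ cl c l ↔ c m = l := by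
  simp [cl]

/-- 1D bias-variance identity -/
lemma oneD_key (s : Finset (Fin n)) (y : Fin n → ℝ) (v : ℝ) (hs : s.Nonempty) :
    ∑ m ∈ s, (y m - v)^2 =
      ∑ m ∈ s, (y m - (∑ m' ∈ s, y m') / s.card)^2
        + s.card * (v - (∑ m' ∈ s, y m') / s.card)^2 := by
  have hcard : (s.card : ℝ) ≠ 0 := by
    have := Finset.card_pos.mpr hs
    positivity
  set a : ℝ := (∑ m' ∈ s, y m') / s.card with ha
  have hsum : ∑ m ∈ s, (y m - a) = 0 := by
    rw [Finset.sum_sub_distrib, Finset.sum_const, nsmul_eq_mul, ha]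
    field_simp
    ring
  have expand : ∀ m, (y m - v)^2
      = (y m - a)^2 + (2*(a - v))*(y m - a) + (v - a)^2 := by
    intro m; ring
  calc ∑ m ∈ s, (y m - v)^2
      = ∑ m ∈ s, ((y m - a)^2 + (2*(a - v))*(y m - a) + (v - a)^2) :=
        Finset.sum_congr rfl (fun m _ => expand m)
    _ = (∑ m ∈ s, (y m - a)^2) + (2*(a - v)) * (∑ m ∈ s, (y m - a))
          + s.card * (v - a)^2 := by
        rw [Finset.sum_add_distrib, Finset.sum_add_distrib, ← Finset.mul_sum,
          Finset.sum_const, nsmul_eq_mul]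
    _ = _ := by rw [hsum]; ring

lemma oneD_le (s : Finset (Fin n)) (y : Fin n → ℝ) (v : ℝ) :
    ∑ m ∈ s, (y m - (∑ m' ∈ s, y m') / s.card)^2 ≤ ∑ m ∈ s, (y m - v)^2 := by
  rcases s.eq_empty_or_nonempty with rfl | hs
  · simp
  · rw [oneD_key s y v hs]
    nlinarith [sq_nonneg (v - (∑ m' ∈ s, y m') / s.card), Nat.cast_nonneg (α := ℝ) s.card]

lemma norm_sq_eq (v : EuclideanSpace ℝ (Fin d)) : ‖v‖^2 = ∑ j', (v j')^2 := by
  rw [EuclideanSpace.norm_eq, Real.sq_sqrt (by positivity)]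
  simp [Real.norm_eq_abs, sq_abs]

lemma sum_coord {ι : Type*} (s : Finset ι) (v : ι → EuclideanSpace ℝ (Fin d)) (j' : Fin d) :
    (∑ m ∈ s, v m) j' = ∑ m ∈ s, v m j' := by
  induction s using Finset.cons_induction with
  | empty => rfl
  | cons a s ha ih => rw [Finset.sum_cons, Finset.sum_cons, PiLp.add_apply, ih]

/-- cluster centroids -/
noncomputable def ctr (Y : Fin n → EuclideanSpace ℝ (Fin d)) (c : Fin n → Fin k) :
    Fin k → EuclideanSpace ℝ (Fin d) :=
  fun l => ((cl c l).card : ℝ)⁻¹ • ∑ m ∈ cl c l, Y m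

lemma ctr_apply (Y : Fin n → EuclideanSpace ℝ (Fin d)) (c : Fin n → Fin k)
    (l : Fin k) (j' : Fin d) :
    ctr Y c l j' = (∑ m ∈ cl c l, Y m j') / (cl c l).card := by
  show ((cl c l).card : ℝ)⁻¹ * (∑ m ∈ cl c l, Y m) j' = _
  rw [sum_coord, div_eq_inv_mul]

lemma kmObj_eq (Y : Fin n → EuclideanSpace ℝ (Fin d)) (c : Fin n → Fin k)
    (μ : Fin k → EuclideanSpace ℝ (Fin d)) :
    kmObj' n d k Y c μ = ∑ j' : Fin d, ∑ l : Fin k, ∑ m ∈ cl c l, (Y m j' - μ l j')^2 := by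
  unfold kmObj'
  have h1 : ∀ m, ‖Y m - μ (c m)‖^2 = ∑ j', (Y m j' - μ (c m) j')^2 := by
    intro m; rw [norm_sq_eq]; rfl
  rw [Finset.sum_congr rfl (fun m _ => h1 m), Finset.sum_comm]
  refine Finset.sum_congr rfl (fun j' _ => ?_)
  rw [← Finset.sum_fiberwise Finset.univ c (fun m => (Y m j' - μ (c m) j')^2)]
  refine Finset.sum_congr rfl (fun l _ => Finset.sum_congr rfl (fun m hm => ?_))
  rw [mem_cl.mp hm]

/-- objective with centroids -/
noncomputable def G (Y : Fin n → EuclideanSpace ℝ (Fin d)) (c : Fin n → Fin k) : ℝ :=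
  kmObj' n d k Y c (ctr Y c)

lemma ctr_min (Y : Fin n → EuclideanSpace ℝ (Fin d)) (c : Fin n → Fin k)
    (μ : Fin k → EuclideanSpace ℝ (Fin d)) :
    G Y c ≤ kmObj' n d k Y c μ := by
  rw [G, kmObj_eq, kmObj_eq]
  refine Finset.sum_le_sum (fun j' _ => Finset.sum_le_sum (fun l _ => ?_))
  have := oneD_le (cl c l) (fun m => Y m j') (μ l j')
  calc ∑ m ∈ cl c l, (Y m j' - ctr Y c l j')^2
      = ∑ m ∈ cl c l, ((fun m => Y m j') m - (∑ m' ∈ cl c l, Y m' j') / (cl c l).card)^2 := by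
        refine Finset.sum_congr rfl (fun m _ => ?_); rw [ctr_apply]
    _ ≤ _ := this

lemma sum_split (F : Fin d → Fin k → ℝ) (j0 : Fin d) (l0 : Fin k) :
    ∑ j' : Fin d, ∑ l : Fin k, F j' l
      = F j0 l0 + ∑ p ∈ (Finset.univ ×ˢ (Finset.univ : Finset (Fin k))).erase (j0, l0),
          F p.1 p.2 := by
  rw [← Finset.sum_product']
  exact (Finset.add_sum_erase ((Finset.univ : Finset (Fin d)) ×ˢ (Finset.univ : Finset (Fin k)))
    (fun p => F p.1 p.2) (a := (j0, l0))
    (Finset.mem_product.mpr ⟨Finset.mem_univ _, Finset.mem_univ _⟩)).symm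

end KM19

namespace KM19

section Perturb

variable {n d k : ℕ} (X : Fin n → EuclideanSpace ℝ (Fin d)) (i : Fin n) (j : Fin d)

lemma pe_apply (t : ℝ) (m : Fin n) (j' : Fin d) :
    perturbEntry' n d X i j t m j' = if m = i ∧ j' = j then t else X m j' := by
  unfold perturbEntry'
  by_cases hm : m = i
  · subst hm
    rw [if_pos rfl]
    have h1 : (X m + (t - X m j) • EuclideanSpace.single j (1:ℝ)) j'
        = X m j' + (t - X m j) * (EuclideanSpace.single j (1:ℝ) j') := rfl
    rw [h1]
    by_cases hj : j' = j
    · subst hj; rw [if_pos ⟨rfl, rfl⟩, EuclideanSpace.single_apply, if_pos rfl]; ring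
    · rw [if_neg (by tauto), EuclideanSpace.single_apply, if_neg hj]; ring
  · rw [if_neg hm]
    have h1 : (X m + (0 : EuclideanSpace ℝ (Fin d))) j' = X m j' + 0 := rfl
    rw [h1, if_neg (by tauto), add_zero]

variable (c : Fin n → Fin k)

/-- size of the cluster containing row `i` -/
def Nc : ℕ := (cl c (c i)).card

/-- sum of the `j`-th coordinates of the other rows in the cluster of `i` -/
noncomputable def Sc : ℝ := ∑ m ∈ (cl c (c i)).erase i, X m j

lemma i_mem_cl : i ∈ cl c (c i) := mem_cl.mpr rfl

lemma Nc_pos : 0 < Nc i c := Finset.card_pos.mpr ⟨i, i_mem_cl i c⟩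

lemma sum_B (t : ℝ) :
    ∑ m ∈ cl c (c i), perturbEntry' n d X i j t m j = t + Sc X i j c := by
  rw [← Finset.add_sum_erase _ _ (i_mem_cl i c), pe_apply, Sc]
  simp only [and_self, if_true]
  congr 1
  refine Finset.sum_congr rfl (fun m hm => ?_)
  rw [pe_apply]
  simp [Finset.ne_of_mem_erase hm]

lemma ctr_pe_j (t : ℝ) :
    ctr (perturbEntry' n d X i j t) c (c i) j = (t + Sc X i j c) / (Nc i c) := by
  rw [ctr_apply, sum_B, Nc]

/-- sum of squares expansion over a finset -/
lemma sum_sq_expand (s : Finset (Fin n)) (y : Fin n → ℝ) (u : ℝ) :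
    ∑ m ∈ s, (y m - u)^2
      = (∑ m ∈ s, (y m)^2) - 2*u*(∑ m ∈ s, y m) + s.card * u^2 := by
  have : ∀ m, (y m - u)^2 = (y m)^2 - (2*u)*(y m) + u^2 := fun m => by ring
  rw [Finset.sum_congr rfl (fun m _ => this m), Finset.sum_add_distrib,
    Finset.sum_sub_distrib, ← Finset.mul_sum, Finset.sum_const, nsmul_eq_mul]

end Perturb

end KM19

namespace KM19

section Quad

variable {n d k : ℕ} (X : Fin n → EuclideanSpace ℝ (Fin d)) (i : Fin n) (j : Fin d)
  (c : Fin n → Fin k)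

lemma W_rest (t : ℝ) (p : Fin d × Fin k) (hp : p ≠ (j, c i)) :
    ∑ m ∈ cl c p.2, (perturbEntry' n d X i j t m p.1
        - ctr (perturbEntry' n d X i j t) c p.2 p.1)^2
      = ∑ m ∈ cl c p.2, (perturbEntry' n d X i j 0 m p.1
        - ctr (perturbEntry' n d X i j 0) c p.2 p.1)^2 := by
  have key : ∀ m ∈ cl c p.2, perturbEntry' n d X i j t m p.1
      = perturbEntry' n d X i j 0 m p.1 := by
    intro m hm
    rw [pe_apply, pe_apply]
    by_cases hj : p.1 = j
    · have hl : p.2 ≠ c i := fun h => hp (by rw [Prod.ext_iff]; exact ⟨hj, h⟩)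
      have hmi : m ≠ i := fun h => hl (by rw [← mem_cl.mp hm, h])
      rw [if_neg (by tauto), if_neg (by tauto)]
    · rw [if_neg (by tauto), if_neg (by tauto)]
  have hctr : ctr (perturbEntry' n d X i j t) c p.2 p.1
      = ctr (perturbEntry' n d X i j 0) c p.2 p.1 := by
    rw [ctr_apply, ctr_apply]
    congr 1
    exact Finset.sum_congr rfl key
  refine Finset.sum_congr rfl (fun m hm => ?_)
  rw [key m hm, hctr]

lemma W_main (t : ℝ) :
    ∑ m ∈ cl c (c i), (perturbEntry' n d X i j t m j
        - ctr (perturbEntry' n d X i j t) c (c i) j)^2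
      = (t - (t + Sc X i j c) / (Nc i c))^2
        + ((∑ m ∈ (cl c (c i)).erase i, (X m j)^2)
            - 2*((t + Sc X i j c) / (Nc i c))*(Sc X i j c)
            + ((cl c (c i)).erase i).card * ((t + Sc X i j c) / (Nc i c))^2) := by
  set u : ℝ := (t + Sc X i j c) / (Nc i c) with hu
  have hc : ctr (perturbEntry' n d X i j t) c (c i) j = u := ctr_pe_j X i j c t
  have h1 : ∑ m ∈ cl c (c i), (perturbEntry' n d X i j t m j
      - ctr (perturbEntry' n d X i j t) c (c i) j)^2
      = ∑ m ∈ cl c (c i), (perturbEntry' n d X i j t m j - u)^2 :=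
    Finset.sum_congr rfl (fun m _ => by rw [hc])
  rw [h1, ← Finset.add_sum_erase _ _ (i_mem_cl i c)]
  congr 1
  · rw [pe_apply, if_pos ⟨rfl, rfl⟩]
  · have h2 : ∑ m ∈ (cl c (c i)).erase i, (perturbEntry' n d X i j t m j - u)^2
        = ∑ m ∈ (cl c (c i)).erase i, ((fun m => X m j) m - u)^2 :=
      Finset.sum_congr rfl (fun m hm => by
        rw [pe_apply, if_neg (by simp [Finset.ne_of_mem_erase hm])])
    rw [h2, sum_sq_expand, Sc]

lemma G_pe_formula (t : ℝ) :
    G (perturbEntry' n d X i j t) c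
      = (1 - ((Nc i c : ℝ))⁻¹) * t^2 - (2 * Sc X i j c / Nc i c) * t
        + G (perturbEntry' n d X i j 0) c := by
  have hsplit : ∀ s : ℝ, G (perturbEntry' n d X i j s) c
      = (∑ m ∈ cl c (c i), (perturbEntry' n d X i j s m j
          - ctr (perturbEntry' n d X i j s) c (c i) j)^2)
        + ∑ p ∈ (Finset.univ ×ˢ (Finset.univ : Finset (Fin k))).erase (j, c i),
            ∑ m ∈ cl c p.2, (perturbEntry' n d X i j s m p.1
              - ctr (perturbEntry' n d X i j s) c p.2 p.1)^2 := by
    intro s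
    rw [G, kmObj_eq, sum_split (fun j' l => ∑ m ∈ cl c l,
      (perturbEntry' n d X i j s m j' - ctr (perturbEntry' n d X i j s) c l j')^2) j (c i)]
  have hrest : ∑ p ∈ (Finset.univ ×ˢ (Finset.univ : Finset (Fin k))).erase (j, c i),
      ∑ m ∈ cl c p.2, (perturbEntry' n d X i j t m p.1
        - ctr (perturbEntry' n d X i j t) c p.2 p.1)^2
      = ∑ p ∈ (Finset.univ ×ˢ (Finset.univ : Finset (Fin k))).erase (j, c i),
      ∑ m ∈ cl c p.2, (perturbEntry' n d X i j 0 m p.1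
        - ctr (perturbEntry' n d X i j 0) c p.2 p.1)^2 :=
    Finset.sum_congr rfl (fun p hp => W_rest X i j c t p (Finset.ne_of_mem_erase hp))
  have hN : ((Nc i c : ℝ)) ≠ 0 := by
    have := Nc_pos i c; positivity
  have hE : (((cl c (c i)).erase i).card : ℝ) = (Nc i c : ℝ) - 1 := by
    rw [Finset.card_erase_of_mem (i_mem_cl i c)]
    have h1 : 1 ≤ (cl c (c i)).card := Nc_pos i c
    rw [Nat.cast_sub h1, Nat.cast_one]
    rfl
  rw [hsplit t, hsplit 0, hrest, W_main, W_main, hE]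
  field_simp
  ring
end Quad

end KM19

namespace KM19

section Fitted

variable {n d k : ℕ} (X : Fin n → EuclideanSpace ℝ (Fin d)) (i : Fin n) (j : Fin d)
  (c : Fin n → Fin k)

lemma fitted_eq (t : ℝ) (μ : Fin k → EuclideanSpace ℝ (Fin d))
    (hmin : ∀ μ' : Fin k → EuclideanSpace ℝ (Fin d),
      kmObj' n d k (perturbEntry' n d X i j t) c μ
        ≤ kmObj' n d k (perturbEntry' n d X i j t) c μ') :
    μ (c i) j = (t + Sc X i j c) / (Nc i c) := by
  classical
  set Y := perturbEntry' n d X i j t with hY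
  set a : ℝ := μ (c i) j with ha
  set mean : ℝ := (t + Sc X i j c) / (Nc i c) with hmean
  set w : EuclideanSpace ℝ (Fin d) := μ (c i) + (mean - a) • EuclideanSpace.single j 1 with hw
  set ν : Fin k → EuclideanSpace ℝ (Fin d) := Function.update μ (c i) w with hν
  -- coordinates of ν
  have hν_eq : ∀ (j' : Fin d) (l : Fin k), (j', l) ≠ (j, c i) → ν l j' = μ l j' := by
    intro j' l hne
    by_cases hl : l = c i
    · subst hl
      have hj : j' ≠ j := fun h => hne (by rw [Prod.ext_iff]; exact ⟨h, rfl⟩)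
      rw [hν, Function.update_self]
      show μ (c i) j' + (mean - a) * (EuclideanSpace.single j (1:ℝ) j') = μ (c i) j'
      rw [EuclideanSpace.single_apply, if_neg hj]
      ring
    · rw [hν, Function.update_of_ne hl]
  have hν_j : ν (c i) j = mean := by
    rw [hν, Function.update_self]
    show μ (c i) j + (mean - a) * (EuclideanSpace.single j (1:ℝ) j) = mean
    rw [EuclideanSpace.single_apply, if_pos rfl]
    ring
  -- compare the two objectives blockwise
  have hobj : ∀ κ : Fin k → EuclideanSpace ℝ (Fin d), kmObj' n d k Y c κ
      = (∑ m ∈ cl c (c i), (Y m j - κ (c i) j)^2)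
        + ∑ p ∈ (Finset.univ ×ˢ (Finset.univ : Finset (Fin k))).erase (j, c i),
            ∑ m ∈ cl c p.2, (Y m p.1 - κ p.2 p.1)^2 := by
    intro κ
    rw [kmObj_eq, sum_split (fun j' l => ∑ m ∈ cl c l, (Y m j' - κ l j')^2) j (c i)]
  have hrest : ∑ p ∈ (Finset.univ ×ˢ (Finset.univ : Finset (Fin k))).erase (j, c i),
      ∑ m ∈ cl c p.2, (Y m p.1 - ν p.2 p.1)^2
      = ∑ p ∈ (Finset.univ ×ˢ (Finset.univ : Finset (Fin k))).erase (j, c i),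
      ∑ m ∈ cl c p.2, (Y m p.1 - μ p.2 p.1)^2 :=
    Finset.sum_congr rfl (fun p hp => Finset.sum_congr rfl (fun m _ => by
      rw [hν_eq p.1 p.2 (Finset.ne_of_mem_erase hp)]))
  have hcomp := hmin ν
  rw [hobj μ, hobj ν, hrest, hν_j] at hcomp
  have hsum_le : ∑ m ∈ cl c (c i), (Y m j - a)^2
      ≤ ∑ m ∈ cl c (c i), (Y m j - mean)^2 := by linarith
  -- the mean is the strict minimizer
  have hmean' : mean = (∑ m' ∈ cl c (c i), Y m' j) / (cl c (c i)).card := by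
    rw [hmean, hY, sum_B, Nc]
  have hkey := oneD_key (cl c (c i)) (fun m => Y m j) a ⟨i, i_mem_cl i c⟩
  rw [← hmean'] at hkey
  have hNpos : (0:ℝ) < (cl c (c i)).card := by
    exact_mod_cast Finset.card_pos.mpr ⟨i, i_mem_cl i c⟩
  have hzero : ((cl c (c i)).card : ℝ) * (a - mean)^2 ≤ 0 := by linarith
  have h2 : (a - mean)^2 = 0 := by nlinarith [sq_nonneg (a - mean)]
  have h3 : a - mean = 0 := sq_eq_zero_iff.mp h2
  linarith

end Fitted

end KM19

open KM19

/-- Piecewise Lipschitz structure of the k-means fitted value as a function of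
a single entry: there is a finite set of points outside of which the map
`X_{i,j} ↦ M(X)_{i,j}` is Lipschitz with constant 1, i.e. the real line
decomposes into finitely many open intervals on each of which the map is
1-Lipschitz. -/
theorem stmt19 (n d k : ℕ) (X : Fin n → EuclideanSpace ℝ (Fin d))
    (i : Fin n) (j : Fin d) (f : ℝ → ℝ)
    (hf : ∀ t : ℝ, ∃ (c : Fin n → Fin k) (μ : Fin k → EuclideanSpace ℝ (Fin d)),
      (∀ (c' : Fin n → Fin k) (μ' : Fin k → EuclideanSpace ℝ (Fin d)),
        kmObj' n d k (perturbEntry' n d X i j t) c μ ≤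
          kmObj' n d k (perturbEntry' n d X i j t) c' μ') ∧
      (∀ (m : Fin n) (l : Fin k),
        ‖perturbEntry' n d X i j t m - μ (c m)‖ ≤
          ‖perturbEntry' n d X i j t m - μ l‖) ∧
      f t = μ (c i) j) :
    ∃ F : Finset ℝ, ∀ x y : ℝ, (∀ t ∈ Set.uIcc x y, t ∉ F) →
      |f x - f y| ≤ 1 * |x - y| := by
  classical
  set A : (Fin n → Fin k) → ℝ := fun c => 1 - ((Nc i c : ℝ))⁻¹ with hA
  set Bf : (Fin n → Fin k) → ℝ := fun c => -(2 * Sc X i j c / Nc i c) with hBf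
  set C0 : (Fin n → Fin k) → ℝ := fun c => G (perturbEntry' n d X i j 0) c with hC0
  set P : (Fin n → Fin k) × (Fin n → Fin k) → Polynomial ℝ := fun q =>
    Polynomial.C (A q.1 - A q.2) * Polynomial.X^2
      + Polynomial.C (Bf q.1 - Bf q.2) * Polynomial.X
      + Polynomial.C (C0 q.1 - C0 q.2) with hP
  have hev : ∀ q (t : ℝ), (P q).eval t
      = G (perturbEntry' n d X i j t) q.1 - G (perturbEntry' n d X i j t) q.2 := by
    intro q t
    rw [G_pe_formula X i j q.1 t, G_pe_formula X i j q.2 t]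
    simp [hP, hA, hBf, hC0]
    ring
  have hfin : (⋃ q : (Fin n → Fin k) × (Fin n → Fin k),
      {t : ℝ | P q ≠ 0 ∧ (P q).IsRoot t}).Finite := by
    refine Set.finite_iUnion (fun q => ?_)
    by_cases h : P q = 0
    · convert Set.finite_empty using 2
      ext t; simp [h]
    · exact (Polynomial.finite_setOf_isRoot h).subset (fun t ht => ht.2)
  refine ⟨hfin.toFinset, fun x y hxy => ?_⟩
  obtain ⟨c, μ, hmin, -, hfx⟩ := hf x
  obtain ⟨c', μ', hmin', -, hfy⟩ := hf y
  have hfx' : f x = (x + Sc X i j c) / (Nc i c) := by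
    rw [hfx]; exact fitted_eq X i j c x μ (fun ν => hmin c ν)
  have hfy' : f y = (y + Sc X i j c') / (Nc i c') := by
    rw [hfy]; exact fitted_eq X i j c' y μ' (fun ν => hmin' c' ν)
  have h1 : G (perturbEntry' n d X i j x) c ≤ G (perturbEntry' n d X i j x) c' :=
    le_trans (ctr_min _ c μ) (hmin c' (ctr (perturbEntry' n d X i j x) c'))
  have h2 : G (perturbEntry' n d X i j y) c' ≤ G (perturbEntry' n d X i j y) c :=
    le_trans (ctr_min _ c' μ') (hmin' c (ctr (perturbEntry' n d X i j y) c))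
  set q : (Fin n → Fin k) × (Fin n → Fin k) := (c, c') with hq
  have hNc : (0:ℝ) < (Nc i c : ℝ) := by exact_mod_cast Nc_pos i c
  have hNc' : (0:ℝ) < (Nc i c' : ℝ) := by exact_mod_cast Nc_pos i c'
  by_cases hp : P q = 0
  · -- identical objectives: same cluster size and sum
    have hall : ∀ t : ℝ, (A c - A c')*t^2 + (Bf c - Bf c')*t + (C0 c - C0 c') = 0 := by
      intro t
      have h0 : (P q).eval t = 0 := by rw [hp]; simp
      have h1 := hev q t
      rw [h0] at h1
      rw [G_pe_formula X i j c t, G_pe_formula X i j c' t] at h1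
      simp only [hA, hBf, hC0]
      linear_combination -h1
    have e0 := hall 0
    have e1 := hall 1
    have e2 := hall (-1)
    norm_num at e0 e1 e2
    have hA0 : A c - A c' = 0 := by linarith
    have hB0 : Bf c - Bf c' = 0 := by linarith
    have hNeq : (Nc i c : ℝ) = (Nc i c' : ℝ) := by
      have : ((Nc i c : ℝ))⁻¹ = ((Nc i c' : ℝ))⁻¹ := by
        simp only [hA] at hA0; linarith
      exact inv_injective this
    have hSeq : Sc X i j c = Sc X i j c' := by
      simp only [hBf] at hB0
      rw [← hNeq] at hB0
      have h3 : 2 * Sc X i j c / (Nc i c : ℝ) = 2 * Sc X i j c' / (Nc i c : ℝ) := by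
        linarith
      field_simp at h3
      linarith
    rw [hfx', hfy', ← hNeq, ← hSeq]
    rw [div_sub_div_same]
    have hxy' : (x + Sc X i j c) - (y + Sc X i j c) = x - y := by ring
    rw [hxy', abs_div, abs_of_pos hNc, one_mul]
    have hN1 : (1:ℝ) ≤ (Nc i c : ℝ) := by exact_mod_cast Nc_pos i c
    exact div_le_self (abs_nonneg _) hN1
  · -- otherwise a root of P q lies between x and y: contradiction
    exfalso
    have hxF : x ∉ hfin.toFinset := hxy x Set.left_mem_uIcc
    have hyF : y ∉ hfin.toFinset := hxy y Set.right_mem_uIcc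
    have hxroot : ¬ (P q).IsRoot x := by
      intro hr
      exact hxF (hfin.mem_toFinset.mpr (Set.mem_iUnion.mpr ⟨q, hp, hr⟩))
    have hyroot : ¬ (P q).IsRoot y := by
      intro hr
      exact hyF (hfin.mem_toFinset.mpr (Set.mem_iUnion.mpr ⟨q, hp, hr⟩))
    have hx0 : (P q).eval x < 0 := by
      have := hev q x
      rcases lt_or_eq_of_le (by rw [this]; linarith : (P q).eval x ≤ 0) with h | h
      · exact h
      · exact absurd h hxroot
    have hy0 : 0 < (P q).eval y := by
      have := hev q y
      rcases lt_or_eq_of_le (by rw [this]; linarith : 0 ≤ (P q).eval y) with h | h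
      · exact h
      · exact absurd h.symm hyroot
    have cont : ContinuousOn (fun t : ℝ => (P q).eval t) (Set.uIcc x y) :=
      (Polynomial.continuous (P q)).continuousOn
    have hmem : (0:ℝ) ∈ Set.uIcc ((P q).eval x) ((P q).eval y) :=
      Set.mem_uIcc.mpr (Or.inl ⟨le_of_lt hx0, le_of_lt hy0⟩)
    obtain ⟨r, hr, hr0⟩ := intermediate_value_uIcc cont hmem
    exact hxy r hr (hfin.mem_toFinset.mpr (Set.mem_iUnion.mpr ⟨q, hp, hr0⟩))
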